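/- Let Σ be a type, w : ℕ → Option Σ, ζ : Σ, u : ℕ, and let w' := Function.update w u (some ζ). Suppose there are positions with u ⤳_{w'} v₁, v₁ ≤ x_c, x_c < y_o, y_o ⤳_{w'} v₂, v₂ ≤ y_c, such that w' y_o = some ζ and w[v₁,x_c] = w[v₂,y_c]. Then w'[u,x_c] = w'[y_o,y_c]. (Case 3.1 of the proof of Lemma 3.4 of the paper: insertion at the left endpoint of the first interval, matching the symbol at the left endpoint of the second interval.) -/

import Mathlib

/-- `y` carries the next symbol after `x` in the partial word `w`. -/
def Nxt {α : Type*} (w : ℕ → Option α) (x y : ℕ) : Prop :=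
  w x ≠ none ∧ w y ≠ none ∧ x < y ∧ ∀ z, x < z → z < y → w z = none

/-- The subword of `w` between positions `i` and `j` (inclusive). -/
def subword {α : Type*} (w : ℕ → Option α) (i j : ℕ) : List α :=
  (List.range' i (j + 1 - i)).filterMap w

lemma subword_congr' {α : Type*} {w w' : ℕ → Option α} {i j : ℕ}
    (h : ∀ k, i ≤ k → k ≤ j → w k = w' k) : subword w i j = subword w' i j := by
  unfold subword
  apply List.filterMap_congr
  intro k hk
  rw [List.mem_range'_1] at hk
  exact h k hk.1 (by omega)

lemma subword_skip {α : Type*} (w : ℕ → Option α) {i y j : ℕ} (h1 : i ≤ y) (h2 : y ≤ j + 1)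
    (h : ∀ k, i ≤ k → k < y → w k = none) : subword w i j = subword w y j := by
  unfold subword
  have hsplit : List.range' i (j + 1 - i) = List.range' i (y - i) ++ List.range' y (j + 1 - y) := by
    have := @List.range'_append i (y - i) (j + 1 - y) 1
    simp only [one_mul] at this
    rw [show i + (y - i) = y from by omega] at this
    rw [show (y - i) + (j + 1 - y) = j + 1 - i from by omega] at this
    exact this.symm
  rw [hsplit, List.filterMap_append]
  have : List.filterMap w (List.range' i (y - i)) = [] := by
    rw [List.filterMap_eq_nil_iff]
    intro k hk
    rw [List.mem_range'_1] at hk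
    simp [h k hk.1 (by omega)]
  simp [this]

lemma subword_cons_nxt {α : Type*} {w : ℕ → Option α} {x y j : ℕ} {a : α}
    (hx : w x = some a) (hn : Nxt w x y) (hj : y ≤ j) :
    subword w x j = a :: subword w y j := by
  obtain ⟨_, _, hxy, hnone⟩ := hn
  have h1 : subword w x j = a :: subword w (x + 1) j := by
    unfold subword
    rw [show j + 1 - x = (j - x) + 1 from by omega, List.range'_succ, List.filterMap_cons, hx,
      show j + 1 - (x + 1) = j - x from by omega]
  rw [h1, subword_skip w (by omega) (by omega) (fun k hk1 hk2 => hnone k (by omega) hk2)]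

theorem insertion_left_endpoint_case {α : Type*} (w : ℕ → Option α) (ζ : α)
    (u xc yo yc v₁ v₂ : ℕ)
    (hn₁ : Nxt (Function.update w u (some ζ)) u v₁) (h₁ : v₁ ≤ xc) (h₂ : xc < yo)
    (hn₂ : Nxt (Function.update w u (some ζ)) yo v₂) (h₃ : v₂ ≤ yc)
    (hy : (Function.update w u (some ζ)) yo = some ζ)
    (heq : subword w v₁ xc = subword w v₂ yc) :
    subword (Function.update w u (some ζ)) u xc =
      subword (Function.update w u (some ζ)) yo yc := by
  have huv₁ : u < v₁ := hn₁.2.2.1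
  have hyov₂ : yo < v₂ := hn₂.2.2.1
  have hu : (Function.update w u (some ζ)) u = some ζ := Function.update_self _ _ _
  rw [subword_cons_nxt hu hn₁ h₁, subword_cons_nxt hy hn₂ h₃]
  have e1 : subword (Function.update w u (some ζ)) v₁ xc = subword w v₁ xc :=
    subword_congr' fun k hk1 _ => Function.update_of_ne (by omega) _ _
  have e2 : subword (Function.update w u (some ζ)) v₂ yc = subword w v₂ yc :=
    subword_congr' fun k hk1 _ => Function.update_of_ne (by omega) _ _
  rw [e1, e2, heq]
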